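/- The aggregate griefing factor of the deviation x_i* + Δ (Δ > 0) from the Nash equilibrium equals GF_i = (∑_{j≠i} utility loss of j) / (utility loss of i) = 1/(c*·Δ) = (n−1)/(Δ·∑_{j=1}^n c_j). In particular, for Δ < 1/c*, the griefing factor exceeds 1, so the Nash equilibrium is griefable. -/

import Mathlib

open Finset

/-- Payoff of miner `i` in the mining game with costs `c` and allocations `x`. -/
noncomputable def payoff {n : ℕ} (c x : Fin n → ℝ) (i : Fin n) : ℝ :=
  x i / (∑ j, x j) - c i * x i

/-- the aggregate griefing factor of the deviation `x_i* + Δ` from the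
Nash equilibrium equals `1/(c*Δ) = (n−1)/(Δ ∑_j c_j)`, and it exceeds `1`
whenever `Δ < 1/c*`, so the Nash equilibrium is griefable. -/
theorem aggregate_griefing_factor (n : ℕ) (hn : 2 ≤ n) (c : Fin n → ℝ)
    (hc : ∀ i, 0 < c i)
    (cstar : ℝ) (hcstar : cstar = (∑ j, c j) / ((n : ℝ) - 1))
    (hpart : ∀ i, c i < cstar)
    (xstar : Fin n → ℝ) (hx : ∀ i, xstar i = (1 - c i / cstar) / cstar)
    (i : Fin n) (Δ : ℝ) (hΔ : 0 < Δ) :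
    (∑ j ∈ Finset.univ.erase i,
        (payoff c xstar j - payoff c (Function.update xstar i (xstar i + Δ)) j))
      / (payoff c xstar i - payoff c (Function.update xstar i (xstar i + Δ)) i)
      = 1 / (cstar * Δ) ∧
    1 / (cstar * Δ) = ((n : ℝ) - 1) / (Δ * ∑ j, c j) ∧
    (Δ < 1 / cstar →
      1 < (∑ j ∈ Finset.univ.erase i,
        (payoff c xstar j - payoff c (Function.update xstar i (xstar i + Δ)) j))
      / (payoff c xstar i - payoff c (Function.update xstar i (xstar i + Δ)) i)) := by
  have hn1 : (1:ℝ) ≤ (n : ℝ) - 1 := by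
    have : (2:ℝ) ≤ (n : ℝ) := by exact_mod_cast hn
    linarith
  have hn1' : ((n:ℝ) - 1) ≠ 0 := by linarith
  have hcpos : 0 < cstar := lt_trans (hc i) (hpart i)
  have hcne : cstar ≠ 0 := ne_of_gt hcpos
  have hΔne : Δ ≠ 0 := ne_of_gt hΔ
  have hci : 0 < c i := hc i
  have hsumc : ∑ j, c j = cstar * ((n:ℝ) - 1) := by
    rw [hcstar]; field_simp
  have h1t : 0 < 1 + cstar * Δ := by positivity
  have h1tne : (1 + cstar * Δ) ≠ 0 := ne_of_gt h1t
  set x' := Function.update xstar i (xstar i + Δ) with hx'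
  have hS : ∑ j, xstar j = 1 / cstar := by
    have h0 : ∑ j, xstar j = ((n:ℝ) - (∑ j, c j) / cstar) / cstar := by
      rw [Finset.sum_congr rfl (fun j _ => hx j), ← Finset.sum_div]
      congr 1
      rw [Finset.sum_sub_distrib, Finset.sum_const, Finset.card_univ, Fintype.card_fin,
        nsmul_eq_mul, mul_one, Finset.sum_div]
    rw [h0, hsumc]
    field_simp
    ring
  have hS' : ∑ j, x' j = 1 / cstar + Δ := by
    rw [hx', Finset.sum_update_of_mem (Finset.mem_univ i), ← Finset.erase_eq,
      Finset.sum_erase_eq_sub (Finset.mem_univ i), hS]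
    ring
  have hxj' : ∀ j, j ≠ i → x' j = xstar j := fun j hj =>
    Function.update_of_ne hj _ _
  have hxi' : x' i = xstar i + Δ := Function.update_self _ _ _
  have hxi : xstar i = (1 - c i / cstar) / cstar := hx i
  -- numerator
  have hNum : (∑ j ∈ Finset.univ.erase i, (payoff c xstar j - payoff c x' j))
      = c i * Δ / (1 + cstar * Δ) := by
    have hterm : ∀ j ∈ Finset.univ.erase i,
        payoff c xstar j - payoff c x' j
          = xstar j * (cstar - 1 / (1 / cstar + Δ)) := by
      intro j hj
      have hji : j ≠ i := Finset.ne_of_mem_erase hj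
      unfold payoff
      rw [hS, hS', hxj' j hji]
      have hdne : (1 / cstar + Δ) ≠ 0 := by positivity
      field_simp
      ring
    rw [Finset.sum_congr rfl hterm, ← Finset.sum_mul,
      Finset.sum_erase_eq_sub (Finset.mem_univ i), hS, hxi]
    have hdne : (1 / cstar + Δ) ≠ 0 := by positivity
    field_simp
    ring
  -- denominator
  have hDen : payoff c xstar i - payoff c x' i
      = c i * Δ * (cstar * Δ) / (1 + cstar * Δ) := by
    unfold payoff
    rw [hS, hS', hxi', hxi]
    have hdne : (1 / cstar + Δ) ≠ 0 := by positivity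
    field_simp
    ring
  have hratio : (∑ j ∈ Finset.univ.erase i, (payoff c xstar j - payoff c x' j))
      / (payoff c xstar i - payoff c x' i) = 1 / (cstar * Δ) := by
    rw [hNum, hDen]
    have hcine : c i ≠ 0 := ne_of_gt hci
    field_simp
  refine ⟨hratio, ?_, ?_⟩
  · rw [hsumc]
    have hsc : cstar * ((n:ℝ) - 1) ≠ 0 := mul_ne_zero hcne hn1'
    field_simp
  · intro h
    rw [hratio]
    have h1 : cstar * Δ < 1 := by
      have := (lt_div_iff₀ hcpos).mp h
      linarith [this]
    exact one_lt_one_div (by positivity) h1
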